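/- Let t be a positive integer and assume l_p < t and l_c < t. Then there exists a feasible path-cycle packing of total length at least t if and only if there exists a tuple (k, v, u, l) with t ≤ k ≤ 2t and F_{k,l}^{vu} ≠ ∅ such that either (v ∈ B, u ∈ V∖B and l ≤ l_p) or (v = u ∈ V∖B and l ≤ l_c). -/

import Mathlib

/-- An element of a path-cycle packing: a list of vertices together with a flag
telling whether it is a cycle (`true`) or a path (`false`). -/
structure PCElem (V : Type*) where
  verts : List V
  isCycle : Bool

/-- A valid element w.r.t. the arc relation `A`: the vertices are distinct,
consecutive vertices are joined by arcs, there are at least two vertices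
(so paths have length ≥ 1 and cycles have length ≥ 2), and for a cycle the
last vertex is joined back to the first. -/
def ValidElem {V : Type*} (A : V → V → Prop) (e : PCElem V) : Prop :=
  e.verts.Nodup ∧ e.verts.Chain' A ∧ 2 ≤ e.verts.length ∧
    (e.isCycle = true → ∀ h : e.verts ≠ [], A (e.verts.getLast h) (e.verts.head h))

/-- The length (number of arcs) of an element: a cycle on `k` vertices has length `k`,
a path on `k` vertices has length `k - 1`. -/
def elemLen {V : Type*} (e : PCElem V) : ℕ :=
  if e.isCycle then e.verts.length else e.verts.length - 1

/-- The vertex set of an element. -/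
def elemVerts {V : Type*} [DecidableEq V] (e : PCElem V) : Finset V :=
  e.verts.toFinset

/-- A path-cycle packing: a finite set of valid, pairwise vertex-disjoint
paths and cycles. -/
def IsPacking {V : Type*} [DecidableEq V] (A : V → V → Prop)
    (D : Finset (PCElem V)) : Prop :=
  (∀ e ∈ D, ValidElem A e) ∧
    (D : Set (PCElem V)).Pairwise fun e f => Disjoint (elemVerts e) (elemVerts f)

/-- `c(D)`: the total length of a packing. -/
def packLen {V : Type*} (D : Finset (PCElem V)) : ℕ :=
  ∑ e ∈ D, elemLen e

/-- `V(D)`: the set of vertices appearing in a packing. -/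
def packVerts {V : Type*} [DecidableEq V] (D : Finset (PCElem V)) : Finset V :=
  D.biUnion elemVerts

/-- A feasible path: starts at an altruistic vertex of `B` and has length at most `lp`. -/
def FeasPath {V : Type*} (B : Set V) (lp : ℕ) (e : PCElem V) : Prop :=
  e.isCycle = false ∧ (∃ b ∈ B, e.verts.head? = some b) ∧ e.verts.length - 1 ≤ lp

/-- A feasible cycle: contains no vertex of `B` and has length at most `lc`. -/
def FeasCycle {V : Type*} (B : Set V) (lc : ℕ) (e : PCElem V) : Prop :=
  e.isCycle = true ∧ (∀ w ∈ e.verts, w ∉ B) ∧ e.verts.length ≤ lc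

/-- A feasible element: a feasible path or a feasible cycle. -/
def FeasElem {V : Type*} (B : Set V) (lp lc : ℕ) (e : PCElem V) : Prop :=
  FeasPath B lp e ∨ FeasCycle B lc e

/-- A feasible path-cycle packing. -/
def FeasPacking {V : Type*} [DecidableEq V] (A : V → V → Prop) (B : Set V)
    (lp lc : ℕ) (D : Finset (PCElem V)) : Prop :=
  IsPacking A D ∧ ∀ e ∈ D, FeasElem B lp lc e

/-- A semi-feasible element: a feasible path, a feasible cycle, or a path of
length at most `lc` containing no vertex of `B`. -/
def SemiElem {V : Type*} (B : Set V) (lp lc : ℕ) (e : PCElem V) : Prop :=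
  FeasElem B lp lc e ∨
    (e.isCycle = false ∧ (∀ w ∈ e.verts, w ∉ B) ∧ e.verts.length - 1 ≤ lc)

/-- `e` is a `D_l^{vu}`: a path of length `l` from `v` to `u` when `v ≠ u`, and a
cycle of length `l` through `v` when `v = u`. -/
def IsDlvu {V : Type*} [DecidableEq V] (v u : V) (l : ℕ) (e : PCElem V) : Prop :=
  if v = u then
    e.isCycle = true ∧ v ∈ e.verts ∧ e.verts.length = l
  else
    e.isCycle = false ∧ e.verts.head? = some v ∧ e.verts.getLast? = some u ∧
      e.verts.length = l + 1

/-- `F_{k,l}^{vu}`: the collection of vertex sets `V(D)` over all semi-feasible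
packings `D = P ∪ C ∪ {D_l^{vu}}` with `c(D) = k`; the distinguished element
`D_l^{vu}` is semi-feasible and every other element is feasible. -/
def FF {V : Type*} [DecidableEq V] (A : V → V → Prop) (B : Set V) (lp lc : ℕ)
    (k l : ℕ) (v u : V) : Set (Finset V) :=
  { S | ∃ (D : Finset (PCElem V)) (e : PCElem V),
      IsPacking A D ∧ e ∈ D ∧ IsDlvu v u l e ∧ SemiElem B lp lc e ∧
      (∀ f ∈ D, f ≠ e → FeasElem B lp lc f) ∧ packLen D = k ∧ packVerts D = S }

/-- `F ⊎ T = { X ∪ T : X ∈ F, X ∩ T = ∅ }` for a collection of finite sets. -/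
def uplusS {V : Type*} [DecidableEq V] (F : Set (Finset V)) (T : Finset V) :
    Set (Finset V) :=
  { Z | ∃ X ∈ F, Disjoint X T ∧ Z = X ∪ T }

lemma exists_subset_sum_between {α : Type*} (f : α → ℕ) (t : ℕ)
    (D : Finset α) (hf : ∀ e ∈ D, f e < t) (h : t ≤ ∑ e ∈ D, f e) :
    ∃ D' ⊆ D, t ≤ ∑ e ∈ D', f e ∧ ∑ e ∈ D', f e ≤ 2 * t := by
  classical
  induction D using Finset.strongInduction with
  | _ D ih =>
    by_cases h2 : ∑ e ∈ D, f e ≤ 2 * t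
    · exact ⟨D, subset_rfl, h, h2⟩
    · push_neg at h2
      have hD : D.Nonempty := by
        rcases D.eq_empty_or_nonempty with rfl | hne
        · simp at h2
        · exact hne
      obtain ⟨e, he⟩ := hD
      have hsub : D.erase e ⊂ D := Finset.erase_ssubset he
      have hsum : f e + ∑ x ∈ D.erase e, f x = ∑ x ∈ D, f x :=
        Finset.add_sum_erase D f he
      have hfe : f e < t := hf e he
      have ht' : t ≤ ∑ x ∈ D.erase e, f x := by omega
      obtain ⟨D', hD', h1, h2'⟩ := ih _ hsub
        (fun x hx => hf x (Finset.mem_of_mem_erase hx)) ht'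
      exact ⟨D', hD'.trans (Finset.erase_subset _ _), h1, h2'⟩

lemma last_entered {V : Type*} {A : V → V → Prop} {l : List V}
    (hc : l.Chain' A) (h2 : 2 ≤ l.length) (hne : l ≠ []) :
    ∃ w, A w (l.getLast hne) := by
  rw [show l.Chain' A ↔ l.IsChain A from Iff.rfl, List.isChain_iff_getElem] at hc
  have h1 : l.length - 2 + 1 < l.length := by omega
  have hA := hc (l.length - 2) h1
  refine ⟨l.get ⟨l.length - 2, by omega⟩, ?_⟩
  have hl : l.getLast hne = l.get ⟨l.length - 1, by omega⟩ :=
    List.getLast_eq_getElem hne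
  have heq : l.get ⟨l.length - 2 + 1, by omega⟩ = l.get ⟨l.length - 1, by omega⟩ := by
    congr 1
    apply Fin.ext
    show l.length - 2 + 1 = l.length - 1
    omega
  rw [hl, ← heq]
  exact hA

/-- (Lemma 4) With `l_p < t` and `l_c < t`, the instance is a yes-instance iff
there is a tuple `(k, v, u, l)` with `t ≤ k ≤ 2t` and `F_{k,l}^{vu} ≠ ∅` such that
either `v ∈ B`, `u ∉ B` and `l ≤ l_p`, or `v = u ∉ B` and `l ≤ l_c`. -/
theorem yes_iff_FF_nonempty {V : Type*} [Fintype V] [DecidableEq V]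
    (A : V → V → Prop) (B : Set V) (lp lc t : ℕ)
    (hloop : ∀ v, ¬ A v v) (hB : ∀ v u, A v u → u ∉ B)
    (ht : 0 < t) (hlp : lp < t) (hlc : lc < t) :
    (∃ D : Finset (PCElem V), FeasPacking A B lp lc D ∧ t ≤ packLen D) ↔
      (∃ (k l : ℕ) (v u : V), t ≤ k ∧ k ≤ 2 * t ∧
        (FF A B lp lc k l v u).Nonempty ∧
        ((v ∈ B ∧ u ∉ B ∧ l ≤ lp) ∨ (v = u ∧ u ∉ B ∧ l ≤ lc))) := by
  constructor
  · rintro ⟨D, ⟨hpack, hfeas⟩, hlen⟩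
    have hbound : ∀ e ∈ D, elemLen e < t := by
      intro e he
      rcases hfeas e he with ⟨hc, _, hl⟩ | ⟨hc, _, hl⟩
      · simp only [elemLen, hc, if_false, Bool.false_eq_true]; omega
      · simp only [elemLen, hc, if_true]; omega
    obtain ⟨D', hsub, h1, h2⟩ := exists_subset_sum_between elemLen t D hbound hlen
    have hpack' : IsPacking A D' :=
      ⟨fun e he => hpack.1 e (hsub he),
        hpack.2.mono (by exact_mod_cast Finset.coe_subset.mpr hsub)⟩
    have hfeas' : ∀ e ∈ D', FeasElem B lp lc e := fun e he => hfeas e (hsub he)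
    have hne : D'.Nonempty := by
      rcases D'.eq_empty_or_nonempty with rfl | h
      · simp at h1; omega
      · exact h
    obtain ⟨e, he⟩ := hne
    obtain ⟨_, hchain, hlen2, _⟩ := hpack'.1 e he
    have hne' : e.verts ≠ [] := by
      intro h; rw [h] at hlen2; simp at hlen2
    rcases hfeas' e he with ⟨hc, ⟨b, hbB, hhead⟩, hlp'⟩ | ⟨hc, hnB, hlc'⟩
    · -- feasible path case
      obtain ⟨w, hw⟩ := last_entered hchain hlen2 hne'
      have huB : e.verts.getLast hne' ∉ B := hB _ _ hw
      have hvu : b ≠ e.verts.getLast hne' := fun h => huB (h ▸ hbB)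
      refine ⟨packLen D', e.verts.length - 1, b, e.verts.getLast hne',
        h1, h2, ⟨packVerts D', D', e, hpack', he, ?_,
          Or.inl (hfeas' e he), fun f hf _ => hfeas' f hf, rfl, rfl⟩,
        Or.inl ⟨hbB, huB, hlp'⟩⟩
      rw [IsDlvu, if_neg hvu]
      exact ⟨hc, hhead, List.getLast?_eq_getLast hne', by omega⟩
    · -- feasible cycle case
      have hv : e.verts.head hne' ∈ e.verts := List.head_mem hne'
      refine ⟨packLen D', e.verts.length, e.verts.head hne', e.verts.head hne',
        h1, h2, ⟨packVerts D', D', e, hpack', he, ?_,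
          Or.inl (hfeas' e he), fun f hf _ => hfeas' f hf, rfl, rfl⟩,
        Or.inr ⟨rfl, hnB _ hv, hlc'⟩⟩
      rw [IsDlvu, if_pos rfl]
      exact ⟨hc, hv, rfl⟩
  · rintro ⟨k, l, v, u, hkt, hk2, ⟨S, D, e, hpack, he, hdl, hsemi, hothers, hklen, hS⟩, hcond⟩
    refine ⟨D, ⟨hpack, ?_⟩, hklen ▸ hkt⟩
    intro f hf
    by_cases hfe : f = e
    · subst hfe
      rcases hcond with ⟨hvB, huB, _⟩ | ⟨hvu, huB, _⟩
      · have hvu : v ≠ u := fun h => huB (h ▸ hvB)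
        rw [IsDlvu, if_neg hvu] at hdl
        rcases hsemi with h | ⟨_, hnB, _⟩
        · exact h
        · exact absurd hvB (hnB v (List.mem_of_mem_head? hdl.2.1))
      · subst hvu
        rw [IsDlvu, if_pos rfl] at hdl
        rcases hsemi with h | ⟨hc, _, _⟩
        · exact h
        · rw [hdl.1] at hc; exact absurd hc (by simp)
    · exact hothers f hf hfe
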